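/- Let G = (V,E) be a graph on vertices v₁,...,v_n and k a positive integer. Define sets S_{i,j} ⊆ [n]×[n] for i,j ∈ [k] by: (ℓ,r) ∈ S_{i,i} iff ℓ = r, and for i ≠ j, (ℓ,r) ∈ S_{i,j} iff {v_ℓ, v_r} ∈ E. Then G has a clique of size k if and only if there exist values s_{i,j} ∈ S_{i,j} such that entries in the same row of the k×k grid agree in their first coordinate and entries in the same column agree in their second coordinate. -/

import Mathlib

/-- Marx's reduction from k-Clique to Grid Tiling: for a graph `G` on vertices
`v₁,…,v_n`, define `S_{i,j} ⊆ [n]×[n]` by `(ℓ,r) ∈ S_{i,i} ↔ ℓ = r` and, for `i ≠ j`,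
`(ℓ,r) ∈ S_{i,j} ↔ {v_ℓ, v_r} ∈ E(G)`. Then `G` has a clique of size `k` iff there is
a choice `s_{i,j} ∈ S_{i,j}` such that entries in the same row agree in the first
coordinate and entries in the same column agree in the second coordinate. -/
theorem stmt10 (n k : ℕ) (hk : 0 < k) (G : SimpleGraph (Fin n)) :
    (∃ f : Fin k → Fin n, Function.Injective f ∧
        ∀ i j : Fin k, i ≠ j → G.Adj (f i) (f j)) ↔
      (∃ s : Fin k → Fin k → Fin n × Fin n,
        (∀ i j : Fin k,
          (i = j → (s i j).1 = (s i j).2) ∧ (i ≠ j → G.Adj (s i j).1 (s i j).2)) ∧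
        (∀ i j j' : Fin k, (s i j).1 = (s i j').1) ∧
        (∀ i i' j : Fin k, (s i j).2 = (s i' j).2)) := by
  constructor
  · rintro ⟨f, hinj, hadj⟩
    exact ⟨fun i j => (f i, f j), fun i j => ⟨fun h => by rw [h], hadj i j⟩,
      fun _ _ _ => rfl, fun _ _ _ => rfl⟩
  · rintro ⟨s, hS, hrow, hcol⟩
    refine ⟨fun i => (s i i).1, ?_, ?_⟩
    · intro i j hij
      by_contra hne
      have h1 : (s i j).1 = (s i i).1 := hrow i j i
      have h2 : (s i j).2 = (s j j).2 := hcol i j j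
      have h3 := (hS i j).2 hne
      rw [h1, h2, ← (hS j j).1 rfl] at h3
      simp only [] at hij
      rw [hij] at h3
      exact G.irrefl h3
    · intro i j hne
      have h1 : (s i j).1 = (s i i).1 := hrow i j i
      have h2 : (s i j).2 = (s j j).2 := hcol i j j
      have h3 := (hS i j).2 hne
      rwa [h1, h2, ← (hS j j).1 rfl] at h3
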